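/- Let B, C ∈ ℂ[[σ]] with B convergent, and suppose there exists a polynomial F ∈ ℂ[σ] with F(1) ≠ 0 such that the product F·C is absolutely convergent. Then F·(B·C) is convergent. (Hence the product of a convergent series with a series telescopable over the absolutely convergent summation is telescopable over the classical summation.) -/

import Mathlib

open Filter Finset

/-- Key combinatorial identity: partial sums of a Cauchy product. -/
lemma cauchy_partial_sum (a b : ℕ → ℂ) (N : ℕ) :
    ∑ n ∈ range N, ∑ k ∈ range (n + 1), a k * b (n - k)
      = ∑ j ∈ range N, (∑ i ∈ range (N - j), a i) * b j := by
  induction N with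
  | zero => simp
  | succ N ih =>
    rw [Finset.sum_range_succ, ih]
    have h1 : ∑ j ∈ range (N + 1), (∑ i ∈ range (N + 1 - j), a i) * b j
        = ∑ j ∈ range N, (∑ i ∈ range (N - j), a i) * b j
          + ∑ j ∈ range (N + 1), a (N - j) * b j := by
      rw [Finset.sum_range_succ (fun j => (∑ i ∈ range (N + 1 - j), a i) * b j),
        Finset.sum_range_succ (fun j => a (N - j) * b j)]
      have h2 : ∀ j ∈ range N, (∑ i ∈ range (N + 1 - j), a i) * b j
          = (∑ i ∈ range (N - j), a i) * b j + a (N - j) * b j := by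
        intro j hj
        rw [Finset.mem_range] at hj
        have : N + 1 - j = (N - j) + 1 := by omega
        rw [this, Finset.sum_range_succ, add_mul]
      rw [Finset.sum_congr rfl h2, Finset.sum_add_distrib]
      simp only [Nat.sub_self, Nat.add_sub_cancel_left, Finset.range_one, Finset.sum_singleton]
      ring
    rw [h1]
    congr 1
    rw [← Finset.sum_range_reflect (fun k => a k * b (N - k)) (N + 1)]
    apply Finset.sum_congr rfl
    intro j hj
    rw [Finset.mem_range] at hj
    congr 2 <;> omega

/-- Mertens' theorem. -/
lemma mertens (a b : ℕ → ℂ) (l : ℂ)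
    (ha : Tendsto (fun N : ℕ => ∑ n ∈ range N, a n) atTop (nhds l))
    (hb : Summable fun n => ‖b n‖) :
    Tendsto (fun N : ℕ => ∑ n ∈ range N, ∑ k ∈ range (n + 1), a k * b (n - k)) atTop
      (nhds (l * ∑' n, b n)) := by
  have hbs : Summable b := hb.of_norm
  set A : ℕ → ℂ := fun m => ∑ n ∈ range m, a n with hA
  have key : ∀ N, ∑ n ∈ range N, ∑ k ∈ range (n + 1), a k * b (n - k)
      = (∑ j ∈ range N, l * b j) + ∑ j ∈ range N, (A (N - j) - l) * b j := by
    intro N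
    rw [cauchy_partial_sum, ← Finset.sum_add_distrib]
    exact Finset.sum_congr rfl fun j _ => by ring
  simp only [key]
  have h1 : Tendsto (fun N : ℕ => ∑ j ∈ range N, l * b j) atTop (nhds (l * ∑' n, b n)) := by
    simpa [Finset.mul_sum] using hbs.hasSum.tendsto_sum_nat.const_mul l
  have h2 : Tendsto (fun N : ℕ => ∑ j ∈ range N, (A (N - j) - l) * b j) atTop (nhds 0) := by
    obtain ⟨M, hM⟩ := (Metric.isBounded_range_of_tendsto _
      (ha.sub (tendsto_const_nhds (x := l)))).exists_norm_le
    have hM' : ∀ m, ‖A m - l‖ ≤ M := fun m => hM _ ⟨m, rfl⟩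
    have hM0 : 0 ≤ M := le_trans (norm_nonneg _) (hM' 0)
    set S := ∑' n, ‖b n‖ with hS
    have hS0 : 0 ≤ S := tsum_nonneg fun _ => norm_nonneg _
    rw [NormedAddCommGroup.tendsto_nhds_zero]
    rw [Metric.tendsto_atTop] at ha
    intro ε hε
    -- choose J with tail small
    have htail : Tendsto (fun J : ℕ => S - ∑ j ∈ range J, ‖b j‖) atTop (nhds 0) := by
      have h := (tendsto_const_nhds (x := S)).sub hb.hasSum.tendsto_sum_nat
      rw [← hS, sub_self] at h
      exact h
    rw [Metric.tendsto_atTop] at htail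
    obtain ⟨J, hJ⟩ := htail (ε / (2 * (M + 1))) (by positivity)
    have hJ' : S - ∑ j ∈ range J, ‖b j‖ < ε / (2 * (M + 1)) := by
      have := hJ J le_rfl
      rw [Real.dist_eq, sub_zero] at this
      exact lt_of_le_of_lt (le_abs_self _) this
    obtain ⟨N₀, hN₀⟩ := ha (ε / (2 * (S + 1))) (by positivity)
    rw [eventually_atTop]
    refine ⟨J + N₀, fun N hN => ?_⟩
    have hJN : J ≤ N := le_trans (Nat.le_add_right _ _) hN
    calc ‖∑ j ∈ range N, (A (N - j) - l) * b j‖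
        ≤ ∑ j ∈ range N, ‖A (N - j) - l‖ * ‖b j‖ := by
          refine (norm_sum_le _ _).trans (le_of_eq ?_)
          exact Finset.sum_congr rfl fun j _ => norm_mul _ _
      _ = ∑ j ∈ range J, ‖A (N - j) - l‖ * ‖b j‖
          + ∑ j ∈ Ico J N, ‖A (N - j) - l‖ * ‖b j‖ := by
          rw [← Finset.sum_range_add_sum_Ico _ hJN]
      _ ≤ ∑ j ∈ range J, (ε / (2 * (S + 1))) * ‖b j‖ + ∑ j ∈ Ico J N, M * ‖b j‖ := by
          gcongr with j hj j hj
          · rw [Finset.mem_range] at hj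
            have hm : N₀ ≤ N - j := by omega
            have := hN₀ (N - j) hm
            rw [Complex.dist_eq] at this
            exact le_of_lt this
          · exact hM' _
      _ = (ε / (2 * (S + 1))) * ∑ j ∈ range J, ‖b j‖ + M * ∑ j ∈ Ico J N, ‖b j‖ := by
          rw [← Finset.mul_sum, ← Finset.mul_sum]
      _ ≤ (ε / (2 * (S + 1))) * S + M * (S - ∑ j ∈ range J, ‖b j‖) := by
          have hA1 : ∑ j ∈ range J, ‖b j‖ ≤ S :=
            Summable.sum_le_tsum _ (fun _ _ => norm_nonneg _) hb
          have hA2 : ∑ j ∈ Ico J N, ‖b j‖ ≤ S - ∑ j ∈ range J, ‖b j‖ := by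
            have h3 : ∑ j ∈ range J, ‖b j‖ + ∑ j ∈ Ico J N, ‖b j‖
                = ∑ j ∈ range N, ‖b j‖ := Finset.sum_range_add_sum_Ico _ hJN
            have h4 : ∑ j ∈ range N, ‖b j‖ ≤ S :=
              Summable.sum_le_tsum _ (fun _ _ => norm_nonneg _) hb
            linarith
          have hpos : (0:ℝ) ≤ ε / (2 * (S + 1)) := by positivity
          exact add_le_add (mul_le_mul_of_nonneg_left hA1 hpos)
            (mul_le_mul_of_nonneg_left hA2 hM0)
      _ ≤ (ε / (2 * (S + 1))) * S + M * (ε / (2 * (M + 1))) := by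
          gcongr
      _ < ε := by
          have e1 : (ε / (2 * (S + 1))) * S < ε / 2 := by
            rw [div_mul_eq_mul_div, div_lt_div_iff₀ (by positivity) (by norm_num)]
            nlinarith
          have e2 : M * (ε / (2 * (M + 1))) < ε / 2 := by
            rw [mul_div_assoc', div_lt_div_iff₀ (by positivity) (by norm_num)]
            nlinarith
          linarith
  simpa using h1.add h2

/-- A formal power series over `ℂ` is convergent if its sequence of partial sums
converges. -/
def Convergent (X : PowerSeries ℂ) : Prop :=
  ∃ l : ℂ, Filter.Tendsto (fun N : ℕ => ∑ n ∈ Finset.range N, PowerSeries.coeff n X)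
    Filter.atTop (nhds l)

/-- A formal power series over `ℂ` is absolutely convergent if the series of the
norms of its coefficients is summable. -/
def AbsConvergent (X : PowerSeries ℂ) : Prop :=
  Summable fun n : ℕ => ‖PowerSeries.coeff n X‖

theorem convergent_mul_of_telescopable_abs (B C : PowerSeries ℂ) (hB : Convergent B)
    (F : Polynomial ℂ) (hF1 : F.eval 1 ≠ 0)
    (hFC : AbsConvergent ((F : PowerSeries ℂ) * C)) :
    Convergent ((F : PowerSeries ℂ) * (B * C)) := by
  obtain ⟨l, hl⟩ := hB
  set D : PowerSeries ℂ := (F : PowerSeries ℂ) * C with hD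
  have hEq : (F : PowerSeries ℂ) * (B * C) = B * D := by
    rw [hD, mul_left_comm]
  rw [hEq]
  refine ⟨l * ∑' n, PowerSeries.coeff n D, ?_⟩
  have hcoeff : ∀ n : ℕ, PowerSeries.coeff n (B * D)
      = ∑ k ∈ Finset.range (n + 1),
          PowerSeries.coeff k B * PowerSeries.coeff (n - k) D := by
    intro n
    rw [PowerSeries.coeff_mul, Finset.Nat.sum_antidiagonal_eq_sum_range_succ_mk]
  have hm := mertens (fun n => PowerSeries.coeff n B)
    (fun n => PowerSeries.coeff n D) l hl hFC
  refine hm.congr fun N => ?_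
  exact Finset.sum_congr rfl fun n _ => (hcoeff n).symm
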